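/- Let X be a compact perfect metric space and f: X → Y an infinitesimal similitude at every point of X. Then the map x ↦ (Df)(x) is continuous on X. -/

import Mathlib

open Filter Topology

def IsInfSim {X Y : Type*} [MetricSpace X] [MetricSpace Y] (f : X → Y) (x : X) (L : ℝ) : Prop :=
  ∀ u v : ℕ → X, (∀ n, u n ≠ v n) →
    Tendsto u atTop (𝓝 x) → Tendsto v atTop (𝓝 x) →
    Tendsto (fun n => dist (f (u n)) (f (v n)) / dist (u n) (v n)) atTop (𝓝 L)

lemma lemA {X Y : Type*} [MetricSpace X] [MetricSpace Y]
    (f : X → Y) (Df : X → ℝ) (h : ∀ x : X, IsInfSim f x (Df x))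
    (hperf : ∀ x : X, (𝓝[≠] x).NeBot) (z : X) {ε δ : ℝ} (hε : 0 < ε) (hδ : 0 < δ) :
    ∃ u : X, u ≠ z ∧ dist u z < δ ∧ |dist (f u) (f z) / dist u z - Df z| < ε := by
  haveI := hperf z
  obtain ⟨w, hw⟩ := exists_seq_tendsto (𝓝[≠] z)
  have hne : ∀ᶠ n in atTop, w n ≠ z := hw self_mem_nhdsWithin
  obtain ⟨N, hN⟩ := eventually_atTop.mp hne
  set w' : ℕ → X := fun n => w (n + N) with hw'def
  have hw't : Tendsto w' atTop (𝓝[≠] z) := hw.comp (tendsto_add_atTop_nat N)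
  have hw'n : Tendsto w' atTop (𝓝 z) := hw't.mono_right nhdsWithin_le_nhds
  have hr := h z w' (fun _ => z) (fun n => hN _ (Nat.le_add_left N n)) hw'n tendsto_const_nhds
  obtain ⟨N1, hN1⟩ := (Metric.tendsto_atTop.mp hr) ε hε
  obtain ⟨N2, hN2⟩ := (Metric.tendsto_atTop.mp hw'n) δ hδ
  refine ⟨w' (max N1 N2), hN _ (Nat.le_add_left N _), hN2 _ (le_max_right _ _), ?_⟩
  have := hN1 _ (le_max_left N1 N2)
  rwa [Real.dist_eq] at this

theorem stmt10 {X Y : Type*} [MetricSpace X] [CompactSpace X] [MetricSpace Y]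
    (hperf : ∀ x : X, (𝓝[≠] x).NeBot) (f : X → Y) (Df : X → ℝ)
    (h : ∀ x : X, IsInfSim f x (Df x)) : Continuous Df := by
  refine continuous_iff_seqContinuous.mpr ?_
  intro x a hx
  have key : ∀ n : ℕ, ∃ u : X, u ≠ x n ∧ dist u (x n) < 1 / (n + 1) ∧
      |dist (f u) (f (x n)) / dist u (x n) - Df (x n)| < 1 / (n + 1) := by
    intro n
    exact lemA f Df h hperf (x n) (by positivity) (by positivity)
  choose u hu_ne hu_d hu_r using key
  have hbound : Tendsto (fun n : ℕ => 1 / ((n : ℝ) + 1)) atTop (𝓝 0) :=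
    tendsto_one_div_add_atTop_nhds_zero_nat
  have hdx : Tendsto (fun n => dist (x n) a) atTop (𝓝 0) :=
    (tendsto_iff_dist_tendsto_zero).mp hx
  have hu : Tendsto u atTop (𝓝 a) := by
    rw [tendsto_iff_dist_tendsto_zero]
    have : Tendsto (fun n : ℕ => 1 / ((n : ℝ) + 1) + dist (x n) a) atTop (𝓝 (0 + 0)) :=
      hbound.add hdx
    rw [add_zero] at this
    refine squeeze_zero (fun n => dist_nonneg) (fun n => ?_) this
    calc dist (u n) a ≤ dist (u n) (x n) + dist (x n) a := dist_triangle _ _ _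
      _ ≤ 1 / ((n:ℝ) + 1) + dist (x n) a := by
          exact add_le_add (le_of_lt (hu_d n)) le_rfl
  have hrr := h a u x hu_ne hu hx
  have hdiff : Tendsto (fun n => dist (f (u n)) (f (x n)) / dist (u n) (x n) - Df (x n))
      atTop (𝓝 0) := by
    refine squeeze_zero_norm (fun n => le_of_lt ?_) hbound
    exact hu_r n
  have := hrr.sub hdiff
  simpa [Function.comp_def] using this
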